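/- Let T̄ ⊂ ℝ³ be the tetrahedron with vertices (0,0,0),(1,0,0),(1,1,0),(0,0,1). Its faces have outward unit normals n1=(−1,0,0) (face opposite (1,0,0)... appropriately labeled), n2=(1,−1,0)/√2, n3=(0,0,−1), n4=(0,1,1)/√2. Given f ∈ L²(e₁) with e₁ the face in the plane x1=0, define ū(x)=(f(x2,x3),0,0). If q ∈ P_k(e₁) satisfies ∫_{e₁} f z = ∫_{e₁} q z for all z∈P_k(e₁), then (q(x2,x3),0,0) satisfies all BDM_k interpolation conditions for ū on T̄; in particular the moments of the normal trace on the face with normal (1,−1,0)/√2 also coincide. -/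

import Mathlib

open MeasureTheory intervalIntegral MvPolynomial

/-- Dot product on `ℝ × ℝ × ℝ` (viewed as `ℝ³`). -/
def dot3 (a b : ℝ × ℝ × ℝ) : ℝ := a.1 * b.1 + a.2.1 * b.2.1 + a.2.2 * b.2.2

/-- Flux moment `∫_e (F·n) z dS` over the triangular face with vertices `a,b,c`, where
`N = ±(b-a)×(c-a)` is the area-weighted outward normal. -/
noncomputable def faceFluxMoment (F : ℝ × ℝ × ℝ → ℝ × ℝ × ℝ) (a b c N : ℝ × ℝ × ℝ)
    (z : ℝ × ℝ × ℝ → ℝ) : ℝ :=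
  ∫ s in (0:ℝ)..1, ∫ t in (0:ℝ)..(1 - s),
    dot3 (F (a + s • (b - a) + t • (c - a))) N * z (a + s • (b - a) + t • (c - a))

/-- The reference tetrahedron `T̄ = conv{(0,0,0),(0,1,0),(1,1,0),(0,0,1)}` (the element
without regular vertex property), whose faces have outward unit normals `(-1,0,0)`,
`(1,-1,0)/√2`, `(0,0,-1)`, `(0,1,1)/√2`. -/
def barTet : Set (ℝ × ℝ × ℝ) :=
  {p | 0 ≤ p.1 ∧ p.1 ≤ p.2.1 ∧ 0 ≤ p.2.2 ∧ p.2.1 + p.2.2 ≤ 1}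

/-- The face `e₁` of `T̄` (in the plane `x₁ = 0`) in its coordinates `(x₂,x₃)`. -/
def barFace : Set (ℝ × ℝ) := {pr | 0 ≤ pr.1 ∧ 0 ≤ pr.2 ∧ pr.1 + pr.2 ≤ 1}

/-- Evaluation of a polynomial in three variables at a point of `ℝ × ℝ × ℝ`. -/
noncomputable def ev3 (z : MvPolynomial (Fin 3) ℝ) (p : ℝ × ℝ × ℝ) : ℝ :=
  MvPolynomial.eval ![p.1, p.2.1, p.2.2] z

lemma isClosed_barFace : IsClosed barFace := by
  have h1 : IsClosed {pr : ℝ × ℝ | 0 ≤ pr.1} := isClosed_le continuous_const continuous_fst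
  have h2 : IsClosed {pr : ℝ × ℝ | 0 ≤ pr.2} := isClosed_le continuous_const continuous_snd
  have h3 : IsClosed {pr : ℝ × ℝ | pr.1 + pr.2 ≤ 1} :=
    isClosed_le (continuous_fst.add continuous_snd) continuous_const
  exact (h1.inter (h2.inter h3))

lemma measurableSet_barFace : MeasurableSet barFace := isClosed_barFace.measurableSet

lemma isCompact_barFace : IsCompact barFace := by
  refine (isCompact_Icc (a := ((0:ℝ),(0:ℝ))) (b := ((1:ℝ),(1:ℝ)))).of_isClosed_subset
    isClosed_barFace ?_
  rintro ⟨x, y⟩ ⟨h1, h2, h3⟩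
  simp only [Set.mem_Icc, Prod.le_def]
  exact ⟨⟨h1, h2⟩, by linarith, by linarith⟩

lemma isClosed_barTet : IsClosed barTet := by
  have h1 : IsClosed {p : ℝ × ℝ × ℝ | 0 ≤ p.1} := isClosed_le continuous_const continuous_fst
  have h2 : IsClosed {p : ℝ × ℝ × ℝ | p.1 ≤ p.2.1} :=
    isClosed_le continuous_fst (continuous_fst.comp continuous_snd)
  have h3 : IsClosed {p : ℝ × ℝ × ℝ | 0 ≤ p.2.2} :=
    isClosed_le continuous_const (continuous_snd.comp continuous_snd)
  have h4 : IsClosed {p : ℝ × ℝ × ℝ | p.2.1 + p.2.2 ≤ 1} :=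
    isClosed_le ((continuous_fst.comp continuous_snd).add
      (continuous_snd.comp continuous_snd)) continuous_const
  exact h1.inter (h2.inter (h3.inter h4))

lemma measurableSet_barTet : MeasurableSet barTet := isClosed_barTet.measurableSet

lemma isCompact_barTet : IsCompact barTet := by
  refine (isCompact_Icc (a := ((0:ℝ),(0:ℝ),(0:ℝ))) (b := ((1:ℝ),(1:ℝ),(1:ℝ)))).of_isClosed_subset
    isClosed_barTet ?_
  rintro ⟨x, y, z⟩ ⟨h1, h2, h3, h4⟩
  simp only [Set.mem_Icc, Prod.le_def]
  exact ⟨⟨h1, by linarith, h3⟩, by linarith, by linarith, by linarith⟩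

lemma tri_eq (g : ℝ × ℝ → ℝ) (hg : IntegrableOn g barFace volume) :
    (∫ pr in barFace, g pr) = ∫ s in (0:ℝ)..1, ∫ t in (0:ℝ)..(1 - s), g (s, t) := by
  have hind : Integrable (barFace.indicator g) volume :=
    (integrable_indicator_iff measurableSet_barFace).2 hg
  rw [← MeasureTheory.integral_indicator measurableSet_barFace]
  rw [Measure.volume_eq_prod] at hind ⊢
  rw [MeasureTheory.integral_prod _ hind]
  have inner : ∀ x : ℝ, (∫ y, barFace.indicator g (x, y)) =
      (Set.Icc (0:ℝ) 1).indicator (fun s => ∫ t in (0:ℝ)..(1 - s), g (s, t)) x := by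
    intro x
    by_cases hx : x ∈ Set.Icc (0:ℝ) 1
    · rw [Set.indicator_of_mem hx]
      have hfun : (fun y => barFace.indicator g (x, y)) =
          (Set.Icc (0:ℝ) (1 - x)).indicator (fun y => g (x, y)) := by
        funext y
        simp only [Set.indicator_apply, barFace, Set.mem_setOf_eq, Set.mem_Icc]
        refine if_congr ?_ rfl rfl
        obtain ⟨h0, h1⟩ := Set.mem_Icc.1 hx
        constructor
        · rintro ⟨_, hy0, hy1⟩; exact ⟨hy0, by linarith⟩
        · rintro ⟨hy0, hy1⟩; exact ⟨h0, hy0, by linarith⟩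
      rw [hfun, MeasureTheory.integral_indicator measurableSet_Icc, integral_Icc_eq_integral_Ioc,
        ← intervalIntegral.integral_of_le (by linarith [(Set.mem_Icc.1 hx).2] : (0:ℝ) ≤ 1 - x)]
    · rw [Set.indicator_of_notMem hx]
      have hfun : (fun y => barFace.indicator g (x, y)) = fun _ => (0:ℝ) := by
        funext y
        refine Set.indicator_of_notMem (fun hmem => hx ?_) _
        obtain ⟨h0, hy0, h1⟩ := hmem
        exact Set.mem_Icc.2 ⟨h0, by linarith⟩
      rw [hfun, integral_zero]
  rw [show (fun x => ∫ y, barFace.indicator g (x, y)) =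
      (Set.Icc (0:ℝ) 1).indicator (fun s => ∫ t in (0:ℝ)..(1 - s), g (s, t)) from funext inner]
  rw [MeasureTheory.integral_indicator measurableSet_Icc, integral_Icc_eq_integral_Ioc,
    ← intervalIntegral.integral_of_le (by norm_num : (0:ℝ) ≤ 1)]

lemma tet_eq (g : ℝ × ℝ × ℝ → ℝ) (hg : IntegrableOn g barTet volume) :
    (∫ p in barTet, g p) = ∫ pr in barFace, ∫ x in (0:ℝ)..pr.1, g (x, pr) := by
  have hind : Integrable (barTet.indicator g) volume :=
    (integrable_indicator_iff measurableSet_barTet).2 hg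
  rw [← MeasureTheory.integral_indicator measurableSet_barTet]
  rw [Measure.volume_eq_prod] at hind ⊢
  rw [MeasureTheory.integral_prod_symm _ hind]
  have inner : ∀ pr : ℝ × ℝ, (∫ x, barTet.indicator g (x, pr)) =
      barFace.indicator (fun pr => ∫ x in (0:ℝ)..pr.1, g (x, pr)) pr := by
    intro pr
    by_cases hpr : pr ∈ barFace
    · rw [Set.indicator_of_mem hpr]
      obtain ⟨h1, h2, h3⟩ := hpr
      have hfun : (fun x => barTet.indicator g (x, pr)) =
          (Set.Icc (0:ℝ) pr.1).indicator (fun x => g (x, pr)) := by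
        funext x
        simp only [Set.indicator_apply, barTet, Set.mem_setOf_eq, Set.mem_Icc]
        refine if_congr ?_ rfl rfl
        constructor
        · rintro ⟨hx0, hx1, _, _⟩; exact ⟨hx0, hx1⟩
        · rintro ⟨hx0, hx1⟩; exact ⟨hx0, hx1, h2, h3⟩
      rw [hfun, MeasureTheory.integral_indicator measurableSet_Icc, integral_Icc_eq_integral_Ioc,
        ← intervalIntegral.integral_of_le h1]
    · rw [Set.indicator_of_notMem hpr]
      have hfun : (fun x => barTet.indicator g (x, pr)) = fun _ => (0:ℝ) := by
        funext x
        refine Set.indicator_of_notMem (fun hmem => hpr ?_) _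
        obtain ⟨hx0, hx1, h2, h3⟩ := hmem
        exact ⟨le_trans hx0 hx1, h2, h3⟩
      rw [hfun, integral_zero]
  rw [show (fun pr => ∫ x, barTet.indicator g (x, pr)) =
      barFace.indicator (fun pr => ∫ x in (0:ℝ)..pr.1, g (x, pr)) from funext inner]
  rw [MeasureTheory.integral_indicator measurableSet_barFace]

lemma eval_bind1 (v : Fin 2 → ℝ) (g : Fin 3 → MvPolynomial (Fin 2) ℝ)
    (z : MvPolynomial (Fin 3) ℝ) :
    eval v (bind₁ g z) = eval (fun i => eval v (g i)) z :=
  eval₂Hom_bind₁ _ _ _ _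

lemma totalDegree_bind1_le (g : Fin 3 → MvPolynomial (Fin 2) ℝ)
    (hg : ∀ i, (g i).totalDegree ≤ 1) (z : MvPolynomial (Fin 3) ℝ) :
    (bind₁ g z).totalDegree ≤ z.totalDegree := by
  conv_lhs => rw [z.as_sum, map_sum]
  refine (MvPolynomial.totalDegree_finset_sum _ _).trans (Finset.sup_le fun m hm => ?_)
  rw [bind₁_monomial]
  refine (MvPolynomial.totalDegree_mul _ _).trans ?_
  have h1 : (MvPolynomial.C (z.coeff m) : MvPolynomial (Fin 2) ℝ).totalDegree = 0 :=
    MvPolynomial.totalDegree_C _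
  rw [h1, zero_add]
  refine (MvPolynomial.totalDegree_finset_prod _ _).trans ?_
  calc ∑ i ∈ m.support, (g i ^ m i).totalDegree
      ≤ ∑ i ∈ m.support, m i * 1 := Finset.sum_le_sum fun i _ =>
        (MvPolynomial.totalDegree_pow _ _).trans (Nat.mul_le_mul_left (m i) (hg i))
    _ = ∑ i ∈ m.support, m i := by simp
    _ = m.sum fun _ e => e := rfl
    _ ≤ z.totalDegree := MvPolynomial.le_totalDegree hm

noncomputable def antid (P : MvPolynomial (Fin 3) ℝ) : MvPolynomial (Fin 2) ℝ :=
  ∑ m ∈ P.support, (C (P.coeff m / (m 0 + 1)) * X 0 ^ (m 0 + m 1 + 1) * X 1 ^ (m 2))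

lemma antid_totalDegree (P : MvPolynomial (Fin 3) ℝ) :
    (antid P).totalDegree ≤ P.totalDegree + 1 := by
  refine (MvPolynomial.totalDegree_finset_sum _ _).trans (Finset.sup_le fun m hm => ?_)
  have h1 : (C (P.coeff m / (m 0 + 1)) * X 0 ^ (m 0 + m 1 + 1) * X 1 ^ (m 2) :
      MvPolynomial (Fin 2) ℝ).totalDegree ≤ (m 0 + m 1 + 1) + m 2 := by
    refine (MvPolynomial.totalDegree_mul _ _).trans ?_
    refine add_le_add ((MvPolynomial.totalDegree_mul _ _).trans ?_)
      ((MvPolynomial.totalDegree_pow _ _).trans ?_)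
    · simp only [MvPolynomial.totalDegree_C, zero_add]
      exact (MvPolynomial.totalDegree_pow _ _).trans (by simp [MvPolynomial.totalDegree_X])
    · simp [MvPolynomial.totalDegree_X]
  refine h1.trans ?_
  have h2 : m 0 + m 1 + m 2 ≤ P.totalDegree := by
    have := MvPolynomial.le_totalDegree hm
    rwa [show (m.sum fun _ e => e) = m 0 + m 1 + m 2 by
      rw [Finsupp.sum_fintype _ _ (fun _ => rfl), Fin.sum_univ_three]] at this
  omega

lemma antid_eval (P : MvPolynomial (Fin 3) ℝ) (y z : ℝ) :
    MvPolynomial.eval ![y, z] (antid P) = ∫ x in (0:ℝ)..y, MvPolynomial.eval ![x, y, z] P := by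
  have hrw : ∀ x : ℝ, MvPolynomial.eval ![x, y, z] P =
      ∑ m ∈ P.support, (P.coeff m * (y ^ m 1 * z ^ m 2)) * x ^ m 0 := by
    intro x
    rw [MvPolynomial.eval_eq']
    refine Finset.sum_congr rfl fun m _ => ?_
    rw [Fin.prod_univ_three]
    simp only [Matrix.cons_val_zero, Matrix.cons_val_one, Matrix.head_cons,
      Matrix.cons_val_two, Matrix.tail_cons]
    ring
  rw [show (fun x => MvPolynomial.eval ![x, y, z] P) = fun x =>
      ∑ m ∈ P.support, (P.coeff m * (y ^ m 1 * z ^ m 2)) * x ^ m 0 from funext hrw]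
  rw [intervalIntegral.integral_finset_sum
    (f := fun m x => (P.coeff m * (y ^ m 1 * z ^ m 2)) * x ^ m 0) (fun m _ =>
    ((continuous_const.mul (continuous_pow (m 0))).intervalIntegrable _ _))]
  rw [antid, map_sum]
  refine Finset.sum_congr rfl fun m _ => ?_
  rw [intervalIntegral.integral_const_mul, integral_pow]
  have hne : ((m 0 : ℝ) + 1) ≠ 0 := by positivity
  simp only [map_mul, map_pow, MvPolynomial.eval_C, MvPolynomial.eval_X,
    Matrix.cons_val_zero, Matrix.cons_val_one, Matrix.head_cons]
  rw [show m 0 + m 1 + 1 = (m 0 + 1) + m 1 by omega, pow_add, pow_add]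
  have h0 : (0:ℝ) ^ (m 0 + 1) = 0 := zero_pow (by omega)
  rw [h0]
  field_simp
  ring

lemma contEval2 (w : MvPolynomial (Fin 2) ℝ) :
    Continuous fun pr : ℝ × ℝ => MvPolynomial.eval ![pr.1, pr.2] w := by
  refine (MvPolynomial.continuous_eval (p := w)).comp (continuous_pi fun i => ?_)
  fin_cases i
  · simpa using continuous_fst
  · simpa using continuous_snd

lemma contEval3 (P : MvPolynomial (Fin 3) ℝ) :
    Continuous fun p : ℝ × ℝ × ℝ => MvPolynomial.eval ![p.1, p.2.1, p.2.2] P := by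
  refine (MvPolynomial.continuous_eval (p := P)).comp (continuous_pi fun i => ?_)
  fin_cases i
  · simpa using continuous_fst
  · simpa using continuous_snd.fst
  · simpa using continuous_snd.snd

lemma integ_face (f : ℝ × ℝ → ℝ) (hf1 : IntegrableOn f barFace volume)
    (w : MvPolynomial (Fin 2) ℝ) :
    IntegrableOn (fun pr => f pr * MvPolynomial.eval ![pr.1, pr.2] w) barFace volume := by
  obtain ⟨C, hC⟩ := isCompact_barFace.exists_bound_of_continuousOn (contEval2 w).continuousOn
  refine Integrable.mono' (hf1.norm.const_mul C)
    (hf1.aestronglyMeasurable.mul (contEval2 w).aestronglyMeasurable) ?_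
  refine (ae_restrict_iff' measurableSet_barFace).2 (Filter.Eventually.of_forall fun pr hpr => ?_)
  rw [norm_mul]
  calc ‖f pr‖ * ‖MvPolynomial.eval ![pr.1, pr.2] w‖ ≤ ‖f pr‖ * C :=
        mul_le_mul_of_nonneg_left (hC pr hpr) (norm_nonneg _)
    _ = C * ‖f pr‖ := mul_comm _ _

lemma barTet_subset : barTet ⊆ (Set.Icc (0:ℝ) 1) ×ˢ barFace := by
  rintro ⟨x, pr⟩ ⟨h1, h2, h3, h4⟩
  have : 0 ≤ pr.1 := le_trans h1 h2
  exact ⟨⟨h1, by dsimp at h2 ⊢; linarith⟩, this, h3, h4⟩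

lemma aesm_snd (f : ℝ × ℝ → ℝ) (hf1 : IntegrableOn f barFace volume) :
    AEStronglyMeasurable (fun p : ℝ × ℝ × ℝ => f p.2) (volume.restrict barTet) := by
  have hmap : Measure.map Prod.snd (volume.restrict barTet) ≪ volume.restrict barFace := by
    refine Measure.AbsolutelyContinuous.mk fun s hs h0 => ?_
    rw [Measure.map_apply measurable_snd hs, Measure.restrict_apply (measurable_snd hs)]
    have hsub : Prod.snd ⁻¹' s ∩ barTet ⊆ (Set.Icc (0:ℝ) 1) ×ˢ (s ∩ barFace) := by
      rintro ⟨x, pr⟩ ⟨hx, hT⟩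
      obtain ⟨ha, hb⟩ := barTet_subset hT
      exact ⟨ha, hx, hb⟩
    refine measure_mono_null hsub ?_
    rw [Measure.restrict_apply hs] at h0
    rw [Measure.volume_eq_prod, Measure.prod_prod, h0, mul_zero]
  exact (hf1.aestronglyMeasurable.mono_ac hmap).comp_measurable measurable_snd

lemma integ_tet (f : ℝ × ℝ → ℝ) (hf1 : IntegrableOn f barFace volume)
    (P : MvPolynomial (Fin 3) ℝ) :
    IntegrableOn (fun p : ℝ × ℝ × ℝ => f p.2 * MvPolynomial.eval ![p.1, p.2.1, p.2.2] P)
      barTet volume := by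
  obtain ⟨C, hC⟩ := isCompact_barTet.exists_bound_of_continuousOn (contEval3 P).continuousOn
  have hnorm : IntegrableOn (fun p : ℝ × ℝ × ℝ => ‖f p.2‖) barTet volume := by
    refine IntegrableOn.mono_set ?_ barTet_subset
    rw [IntegrableOn, Measure.volume_eq_prod, ← Measure.prod_restrict]
    have : Integrable (fun z : ℝ × (ℝ × ℝ) => (1:ℝ) * ‖f z.2‖)
        ((volume.restrict (Set.Icc (0:ℝ) 1)).prod (volume.restrict barFace)) :=
      (integrable_const (1:ℝ)).mul_prod hf1.norm
    simpa using this
  refine Integrable.mono' (hnorm.const_mul C)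
    ((aesm_snd f hf1).mul (contEval3 P).aestronglyMeasurable) ?_
  refine (ae_restrict_iff' measurableSet_barTet).2 (Filter.Eventually.of_forall fun p hp => ?_)
  rw [norm_mul]
  calc ‖f p.2‖ * ‖MvPolynomial.eval ![p.1, p.2.1, p.2.2] P‖ ≤ ‖f p.2‖ * C :=
        mul_le_mul_of_nonneg_left (hC p hp) (norm_nonneg _)
    _ = C * ‖f p.2‖ := mul_comm _ _

lemma face_moment_eq (g : ℝ × ℝ → ℝ) (hg : IntegrableOn g barFace volume) (c : ℝ) :
    (∫ s in (0:ℝ)..1, ∫ t in (0:ℝ)..(1 - s), c * g (s, t)) = c * ∫ pr in barFace, g pr := by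
  simp_rw [intervalIntegral.integral_const_mul]
  rw [tri_eq g hg]

lemma face_both (k : ℕ) (f : ℝ × ℝ → ℝ) (hf1 : IntegrableOn f barFace volume)
    (q : MvPolynomial (Fin 2) ℝ)
    (hmom : ∀ z : MvPolynomial (Fin 2) ℝ, z.totalDegree ≤ k →
      (∫ pr in barFace, f pr * MvPolynomial.eval ![pr.1, pr.2] z) =
        ∫ pr in barFace, (MvPolynomial.eval ![pr.1, pr.2] q) *
          MvPolynomial.eval ![pr.1, pr.2] z)
    (w : MvPolynomial (Fin 2) ℝ) (hw : w.totalDegree ≤ k) (c : ℝ) :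
    (∫ s in (0:ℝ)..1, ∫ t in (0:ℝ)..(1 - s),
        c * (MvPolynomial.eval ![s, t] q * MvPolynomial.eval ![s, t] w)) =
      ∫ s in (0:ℝ)..1, ∫ t in (0:ℝ)..(1 - s),
        c * (f (s, t) * MvPolynomial.eval ![s, t] w) := by
  have hint : IntegrableOn
      (fun pr : ℝ × ℝ => MvPolynomial.eval ![pr.1, pr.2] q * MvPolynomial.eval ![pr.1, pr.2] w)
      barFace volume :=
    (((contEval2 q).mul (contEval2 w)).continuousOn).integrableOn_compact isCompact_barFace
  have h1 := face_moment_eq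
    (fun pr : ℝ × ℝ => MvPolynomial.eval ![pr.1, pr.2] q * MvPolynomial.eval ![pr.1, pr.2] w)
    hint c
  have h2 := face_moment_eq (fun pr : ℝ × ℝ => f pr * MvPolynomial.eval ![pr.1, pr.2] w)
    (integ_face f hf1 w) c
  simp only at h1 h2
  rw [h1, h2, hmom w hw]

/-- Lemma 4-analogue on `T̄`: let `f ∈ L²(e₁)`, `ū(x) = (f(x₂,x₃),0,0)` and let
`q ∈ P_k(e₁)` satisfy `∫_{e₁} f z = ∫_{e₁} q z` for all `z ∈ P_k(e₁)`.  Then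
`(q(x₂,x₃),0,0)` satisfies all BDM_k interpolation conditions for `ū` on `T̄`; in
particular the moments of the normal trace on the face with normal `(1,-1,0)/√2` (the face
in the plane `x₁ = x₂`, which projects bijectively onto `e₁` via `(x₂,x₂,x₃) ↦ (x₂,x₃)`)
also coincide. -/
theorem bdm_zero_barTet (k : ℕ) (hk : 1 ≤ k) (f : ℝ × ℝ → ℝ)
    (hf1 : IntegrableOn f barFace volume)
    (hf2 : IntegrableOn (fun pr => (f pr) ^ 2) barFace volume)
    (q : MvPolynomial (Fin 2) ℝ) (hq : q.totalDegree ≤ k)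
    (hmom : ∀ z : MvPolynomial (Fin 2) ℝ, z.totalDegree ≤ k →
      (∫ pr in barFace, f pr * MvPolynomial.eval ![pr.1, pr.2] z) =
        ∫ pr in barFace, (MvPolynomial.eval ![pr.1, pr.2] q) *
          MvPolynomial.eval ![pr.1, pr.2] z) :
    ∀ ubar pbar : ℝ × ℝ × ℝ → ℝ × ℝ × ℝ,
    ubar = (fun p => (f (p.2.1, p.2.2), 0, 0)) →
    pbar = (fun p => (MvPolynomial.eval ![p.2.1, p.2.2] q, 0, 0)) →
    -- face degrees of freedom agree on all four faces of `T̄`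
    ((∀ z : MvPolynomial (Fin 3) ℝ, z.totalDegree ≤ k →
        faceFluxMoment pbar (0,0,0) (0,1,0) (0,0,1) (-1,0,0) (ev3 z) =
          faceFluxMoment ubar (0,0,0) (0,1,0) (0,0,1) (-1,0,0) (ev3 z)) ∧
      (∀ z : MvPolynomial (Fin 3) ℝ, z.totalDegree ≤ k →
        faceFluxMoment pbar (0,0,0) (1,1,0) (0,0,1) (1,-1,0) (ev3 z) =
          faceFluxMoment ubar (0,0,0) (1,1,0) (0,0,1) (1,-1,0) (ev3 z)) ∧
      (∀ z : MvPolynomial (Fin 3) ℝ, z.totalDegree ≤ k →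
        faceFluxMoment pbar (0,0,0) (1,1,0) (0,1,0) (0,0,-1) (ev3 z) =
          faceFluxMoment ubar (0,0,0) (1,1,0) (0,1,0) (0,0,-1) (ev3 z)) ∧
      (∀ z : MvPolynomial (Fin 3) ℝ, z.totalDegree ≤ k →
        faceFluxMoment pbar (0,1,0) (1,1,0) (0,0,1) (0,1,1) (ev3 z) =
          faceFluxMoment ubar (0,1,0) (1,1,0) (0,0,1) (0,1,1) (ev3 z))) ∧
    -- interior degrees of freedom against `N_{k-1} = (P_{k-2})³ ⊕ S_{k-1}` agree
    (∀ A B : Fin 3 → MvPolynomial (Fin 3) ℝ,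
      (∀ i, (A i).totalDegree + 2 ≤ k ∨ A i = 0) →
      (∀ i, (B i).totalDegree + 1 ≤ k ∨ B i = 0) →
      B 0 * X 0 + B 1 * X 1 + B 2 * X 2 = 0 →
      (∫ p in barTet, dot3 (pbar p)
          (ev3 (A 0 + B 0) p, ev3 (A 1 + B 1) p, ev3 (A 2 + B 2) p)) =
        ∫ p in barTet, dot3 (ubar p)
          (ev3 (A 0 + B 0) p, ev3 (A 1 + B 1) p, ev3 (A 2 + B 2) p)) := by
  intro ubar pbar hubar hpbar
  constructor
  · refine ⟨?_, ?_, ?_, ?_⟩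
    · -- face 1
      intro z hz
      set w : MvPolynomial (Fin 2) ℝ :=
        bind₁ ![0, MvPolynomial.X 0, MvPolynomial.X 1] z with hw
      have hwdeg : w.totalDegree ≤ k := by
        refine le_trans (totalDegree_bind1_le _ ?_ z) hz
        intro i; fin_cases i <;> simp [MvPolynomial.totalDegree_X]
      have hevw : ∀ s t : ℝ, ev3 z (0, s, t) = MvPolynomial.eval ![s, t] w := by
        intro s t
        rw [hw, eval_bind1]
        show MvPolynomial.eval ![(0:ℝ), s, t] z = _
        exact congrArg (fun v => MvPolynomial.eval v z)
          (by funext i; fin_cases i <;> simp)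
      have hL : faceFluxMoment pbar (0,0,0) (0,1,0) (0,0,1) (-1,0,0) (ev3 z) =
          ∫ s in (0:ℝ)..1, ∫ t in (0:ℝ)..(1 - s),
            (-1 : ℝ) * (MvPolynomial.eval ![s, t] q * MvPolynomial.eval ![s, t] w) := by
        rw [faceFluxMoment]
        refine intervalIntegral.integral_congr fun s _ => ?_
        refine intervalIntegral.integral_congr fun t _ => ?_
        have hpt : ((0,0,0) : ℝ×ℝ×ℝ) + s • (((0,1,0):ℝ×ℝ×ℝ) - (0,0,0)) +
            t • (((0,0,1):ℝ×ℝ×ℝ) - (0,0,0)) = (0,s,t) := by simp [Prod.ext_iff]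
        rw [hpt, hpbar, hevw]
        simp [dot3]
      have hR : faceFluxMoment ubar (0,0,0) (0,1,0) (0,0,1) (-1,0,0) (ev3 z) =
          ∫ s in (0:ℝ)..1, ∫ t in (0:ℝ)..(1 - s),
            (-1 : ℝ) * (f (s, t) * MvPolynomial.eval ![s, t] w) := by
        rw [faceFluxMoment]
        refine intervalIntegral.integral_congr fun s _ => ?_
        refine intervalIntegral.integral_congr fun t _ => ?_
        have hpt : ((0,0,0) : ℝ×ℝ×ℝ) + s • (((0,1,0):ℝ×ℝ×ℝ) - (0,0,0)) +
            t • (((0,0,1):ℝ×ℝ×ℝ) - (0,0,0)) = (0,s,t) := by simp [Prod.ext_iff]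
        rw [hpt, hubar, hevw]
        simp [dot3]
      rw [hL, hR, face_both k f hf1 q hmom w hwdeg (-1)]
    · -- face 2
      intro z hz
      set w : MvPolynomial (Fin 2) ℝ :=
        bind₁ ![MvPolynomial.X 0, MvPolynomial.X 0, MvPolynomial.X 1] z with hw
      have hwdeg : w.totalDegree ≤ k := by
        refine le_trans (totalDegree_bind1_le _ ?_ z) hz
        intro i; fin_cases i <;> simp [MvPolynomial.totalDegree_X]
      have hevw : ∀ s t : ℝ, ev3 z (s, s, t) = MvPolynomial.eval ![s, t] w := by
        intro s t
        rw [hw, eval_bind1]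
        show MvPolynomial.eval ![s, s, t] z = _
        exact congrArg (fun v => MvPolynomial.eval v z)
          (by funext i; fin_cases i <;> simp)
      have hL : faceFluxMoment pbar (0,0,0) (1,1,0) (0,0,1) (1,-1,0) (ev3 z) =
          ∫ s in (0:ℝ)..1, ∫ t in (0:ℝ)..(1 - s),
            (1 : ℝ) * (MvPolynomial.eval ![s, t] q * MvPolynomial.eval ![s, t] w) := by
        rw [faceFluxMoment]
        refine intervalIntegral.integral_congr fun s _ => ?_
        refine intervalIntegral.integral_congr fun t _ => ?_
        have hpt : ((0,0,0) : ℝ×ℝ×ℝ) + s • (((1,1,0):ℝ×ℝ×ℝ) - (0,0,0)) +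
            t • (((0,0,1):ℝ×ℝ×ℝ) - (0,0,0)) = (s,s,t) := by simp [Prod.ext_iff]
        rw [hpt, hpbar, hevw]
        simp [dot3]
      have hR : faceFluxMoment ubar (0,0,0) (1,1,0) (0,0,1) (1,-1,0) (ev3 z) =
          ∫ s in (0:ℝ)..1, ∫ t in (0:ℝ)..(1 - s),
            (1 : ℝ) * (f (s, t) * MvPolynomial.eval ![s, t] w) := by
        rw [faceFluxMoment]
        refine intervalIntegral.integral_congr fun s _ => ?_
        refine intervalIntegral.integral_congr fun t _ => ?_
        have hpt : ((0,0,0) : ℝ×ℝ×ℝ) + s • (((1,1,0):ℝ×ℝ×ℝ) - (0,0,0)) +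
            t • (((0,0,1):ℝ×ℝ×ℝ) - (0,0,0)) = (s,s,t) := by simp [Prod.ext_iff]
        rw [hpt, hubar, hevw]
        simp [dot3]
      rw [hL, hR, face_both k f hf1 q hmom w hwdeg 1]
    · -- face 3 : normal (0,0,-1), both fluxes vanish
      intro z hz
      rw [faceFluxMoment, faceFluxMoment]
      refine intervalIntegral.integral_congr fun s _ => ?_
      refine intervalIntegral.integral_congr fun t _ => ?_
      rw [hpbar, hubar]
      simp [dot3]
    · -- face 4 : normal (0,1,1), both fluxes vanish
      intro z hz
      rw [faceFluxMoment, faceFluxMoment]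
      refine intervalIntegral.integral_congr fun s _ => ?_
      refine intervalIntegral.integral_congr fun t _ => ?_
      rw [hpbar, hubar]
      simp [dot3]
  · -- interior moments
    intro A B hA hB _hS
    set P : MvPolynomial (Fin 3) ℝ := A 0 + B 0 with hP
    have hdegP : (antid P).totalDegree ≤ k := by
      have h1 : (A 0).totalDegree + 1 ≤ k := by
        rcases hA 0 with h | h
        · omega
        · rw [h]; simpa using hk
      have h2 : (B 0).totalDegree + 1 ≤ k := by
        rcases hB 0 with h | h
        · omega
        · rw [h]; simpa using hk
      have h3 := MvPolynomial.totalDegree_add (A 0) (B 0)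
      rw [← hP] at h3
      have h4 := antid_totalDegree P
      omega
    have hLp : (∫ p in barTet, dot3 (pbar p)
          (ev3 (A 0 + B 0) p, ev3 (A 1 + B 1) p, ev3 (A 2 + B 2) p)) =
        ∫ pr in barFace, MvPolynomial.eval ![pr.1, pr.2] q *
          MvPolynomial.eval ![pr.1, pr.2] (antid P) := by
      have hint : IntegrableOn (fun p : ℝ×ℝ×ℝ =>
          MvPolynomial.eval ![p.2.1, p.2.2] q * MvPolynomial.eval ![p.1, p.2.1, p.2.2] P)
          barTet volume :=
        ((((contEval2 q).comp continuous_snd).mul (contEval3 P)).continuousOn).integrableOn_compact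
          isCompact_barTet
      have h0 : (∫ p in barTet, dot3 (pbar p)
            (ev3 (A 0 + B 0) p, ev3 (A 1 + B 1) p, ev3 (A 2 + B 2) p)) =
          ∫ p in barTet, MvPolynomial.eval ![p.2.1, p.2.2] q *
            MvPolynomial.eval ![p.1, p.2.1, p.2.2] P := by
        refine setIntegral_congr_fun measurableSet_barTet fun p _ => ?_
        rw [hpbar]
        simp [dot3, ev3, hP]
      rw [h0, tet_eq _ hint]
      refine setIntegral_congr_fun measurableSet_barFace fun pr _ => ?_
      simp only
      rw [intervalIntegral.integral_const_mul, ← antid_eval]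
    have hLu : (∫ p in barTet, dot3 (ubar p)
          (ev3 (A 0 + B 0) p, ev3 (A 1 + B 1) p, ev3 (A 2 + B 2) p)) =
        ∫ pr in barFace, f pr * MvPolynomial.eval ![pr.1, pr.2] (antid P) := by
      have hint := integ_tet f hf1 P
      have h0 : (∫ p in barTet, dot3 (ubar p)
            (ev3 (A 0 + B 0) p, ev3 (A 1 + B 1) p, ev3 (A 2 + B 2) p)) =
          ∫ p in barTet, f p.2 * MvPolynomial.eval ![p.1, p.2.1, p.2.2] P := by
        refine setIntegral_congr_fun measurableSet_barTet fun p _ => ?_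
        rw [hubar]
        simp [dot3, ev3, hP]
      rw [h0, tet_eq _ hint]
      refine setIntegral_congr_fun measurableSet_barFace fun pr _ => ?_
      simp only
      rw [intervalIntegral.integral_const_mul, ← antid_eval]
    rw [hLp, hLu]
    exact (hmom (antid P) hdegP).symm
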